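/- arXiv:2312.00913 — 2 statements merged into one kernel-verified Lean document; each statement's English description precedes it below -/
import Mathlib

section
/- Let M be a matroid on ground set E and A ⊆ E. The coefficient of the monomial t_A = ∏_{e∈A} t_e in T̂_M(x,y,0,1) equals (x−1)^{rk(M) − rk_M(E∖A)} · T_{M∖A}(x,y), where T_{M∖A} is the classical Tutte polynomial of the deletion M∖A. -/
open Finset MvPolynomial

/-- A matroid on a finite ground set `E`, presented by its rank function. -/
structure FinMatroid (α : Type) [DecidableEq α] where
  E : Finset α
  rk : Finset α → ℕ
  rk_empty : rk ∅ = 0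
  rk_le_card : ∀ S : Finset α, rk S ≤ S.card
  rk_mono : ∀ ⦃S T : Finset α⦄, S ⊆ T → rk S ≤ rk T
  rk_submodular : ∀ S T : Finset α, rk (S ∪ T) + rk (S ∩ T) ≤ rk S + rk T

namespace FinMatroid

variable {α : Type} [DecidableEq α]

/-- The equivariant Tutte polynomial of `M`, evaluated at `x y r s : R` and `t : α → R`. -/
def eqTutte (M : FinMatroid α) {R : Type} [CommRing R] (x y r s : R) (t : α → R) : R :=
  ∑ S ∈ M.E.powerset,
    (x - 1) ^ (M.rk M.E - M.rk S) * (y - 1) ^ (S.card - M.rk S) *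
      (∏ e ∈ S, (1 + r * t e)) * (∏ e ∈ M.E \ S, (1 + s * t e))

/-- The classical Tutte polynomial of `M`. -/
def tutte (M : FinMatroid α) {R : Type} [CommRing R] (x y : R) : R :=
  ∑ S ∈ M.E.powerset,
    (x - 1) ^ (M.rk M.E - M.rk S) * (y - 1) ^ (S.card - M.rk S)

/-- `e` is a loop of `M`. -/
def IsLoop (M : FinMatroid α) (e : α) : Prop := M.rk {e} = 0

/-- `e` is a coloop of `M` : it belongs to every basis of `M`. -/
def IsColoop (M : FinMatroid α) (e : α) : Prop :=
  ∀ B ⊆ M.E, M.rk B = B.card → M.rk B = M.rk M.E → e ∈ B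

end FinMatroid

lemma sum_single_apply {α : Type} [DecidableEq α] (U : Finset α) (x : α) :
    (∑ e ∈ U, Finsupp.single e (1:ℕ)) x = if x ∈ U then 1 else 0 := by
  rw [Finsupp.finset_sum_apply]
  simp [Finsupp.single_apply, Finset.sum_ite_eq]

lemma sum_single_inj {α : Type} [DecidableEq α] {U A : Finset α}
    (h : (∑ e ∈ U, Finsupp.single e (1:ℕ)) = ∑ e ∈ A, Finsupp.single e 1) : U = A := by
  ext x
  have := DFunLike.congr_fun h x
  simp only [sum_single_apply] at this
  by_cases hU : x ∈ U <;> by_cases hAx : x ∈ A <;> simp [hU, hAx] at this ⊢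

lemma prod_X_eq_monomial {α R : Type} [DecidableEq α] [CommSemiring R] (U : Finset α) :
    (∏ e ∈ U, (X e : MvPolynomial α R)) = monomial (∑ e ∈ U, Finsupp.single e 1) 1 := by
  classical
  induction U using Finset.induction with
  | empty => simp
  | insert a s h ih =>
    rw [Finset.prod_insert h, ih, Finset.sum_insert h, X, monomial_mul, mul_one]

lemma coeff_prod_one_add {α R : Type} [DecidableEq α] [CommRing R] (T A : Finset α) :
    MvPolynomial.coeff (∑ e ∈ A, Finsupp.single e 1)
      (∏ e ∈ T, (1 + X e : MvPolynomial α R)) = if A ⊆ T then 1 else 0 := by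
  classical
  have h1 : (∏ e ∈ T, (1 + X e : MvPolynomial α R))
      = ∑ U ∈ T.powerset, ∏ e ∈ U, X e := by
    have : ∀ e ∈ T, (1 + X e : MvPolynomial α R) = X e + 1 := fun e _ => add_comm _ _
    rw [Finset.prod_congr rfl this, Finset.prod_add]
    apply Finset.sum_congr rfl
    intro U hU; simp
  rw [h1, MvPolynomial.coeff_sum]
  have hterm : ∀ U ∈ T.powerset,
      MvPolynomial.coeff (∑ e ∈ A, Finsupp.single e 1) (∏ e ∈ U, (X e : MvPolynomial α R))
        = if U = A then 1 else 0 := by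
    intro U _
    rw [prod_X_eq_monomial, MvPolynomial.coeff_monomial]
    by_cases h : U = A
    · subst h; simp
    · rw [if_neg (fun hh => h (sum_single_inj hh)), if_neg h]
  rw [Finset.sum_congr rfl hterm, Finset.sum_ite_eq' T.powerset A (fun _ => (1:R))]
  simp [Finset.mem_powerset]


/-- The coefficient of t_A in T̂_M(x,y,0,1) is
(x−1)^{rk(M)−rk_M(E∖A)}·T_{M∖A}(x,y). -/
theorem coeff_eqTutte_r_zero_s_one {α : Type} [DecidableEq α]
    (M Mdel : FinMatroid α) (A : Finset α) (hA : A ⊆ M.E)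
    (hdE : Mdel.E = M.E \ A)
    (hdrk : ∀ S ⊆ M.E \ A, Mdel.rk S = M.rk S) :
    MvPolynomial.coeff (∑ e ∈ A, Finsupp.single e 1)
        (M.eqTutte (R := MvPolynomial α (MvPolynomial (Fin 2) ℤ))
          (MvPolynomial.C (MvPolynomial.X 0)) (MvPolynomial.C (MvPolynomial.X 1))
          0 1 MvPolynomial.X)
      = (MvPolynomial.X 0 - 1) ^ (M.rk M.E - M.rk (M.E \ A)) *
          Mdel.tutte (MvPolynomial.X 0) (MvPolynomial.X 1) := by
  classical
  have key : ∀ S : Finset α,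
      ((C (X 0) - 1 : MvPolynomial α (MvPolynomial (Fin 2) ℤ)) ^ (M.rk M.E - M.rk S) *
        (C (X 1) - 1) ^ (S.card - M.rk S))
      = C ((X 0 - 1) ^ (M.rk M.E - M.rk S) * (X 1 - 1) ^ (S.card - M.rk S)) := by
    intro S; simp [map_mul, map_pow, map_sub]
  unfold FinMatroid.eqTutte
  simp only [zero_mul, add_zero, Finset.prod_const_one, mul_one, one_mul]
  rw [MvPolynomial.coeff_sum]
  have hterm : ∀ S ∈ M.E.powerset,
      MvPolynomial.coeff (∑ e ∈ A, Finsupp.single e 1)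
        ((C (X 0) - 1 : MvPolynomial α (MvPolynomial (Fin 2) ℤ)) ^ (M.rk M.E - M.rk S) *
            (C (X 1) - 1) ^ (S.card - M.rk S) *
          ∏ e ∈ M.E \ S, (1 + X e))
      = if S ⊆ M.E \ A then
          ((X 0 : MvPolynomial (Fin 2) ℤ) - 1) ^ (M.rk M.E - M.rk S) *
            (X 1 - 1) ^ (S.card - M.rk S) else 0 := by
    intro S hS
    rw [key, MvPolynomial.coeff_C_mul, coeff_prod_one_add]
    rw [Finset.mem_powerset] at hS
    have hiff : (A ⊆ M.E \ S) ↔ (S ⊆ M.E \ A) := by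
      rw [Finset.subset_sdiff, Finset.subset_sdiff]
      exact ⟨fun h => ⟨hS, h.2.symm⟩, fun h => ⟨hA, h.2.symm⟩⟩
    simp only [hiff]
    split <;> simp
  rw [Finset.sum_congr rfl hterm, Finset.sum_ite, Finset.sum_const_zero, add_zero]
  have hfil : M.E.powerset.filter (fun S => S ⊆ M.E \ A) = (M.E \ A).powerset := by
    ext S
    simp only [Finset.mem_filter, Finset.mem_powerset]
    exact ⟨fun h => h.2, fun h => ⟨h.trans Finset.sdiff_subset, h⟩⟩
  rw [hfil]
  unfold FinMatroid.tutte
  rw [hdE, Finset.mul_sum]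
  apply Finset.sum_congr rfl
  intro S hS
  rw [Finset.mem_powerset] at hS
  rw [hdrk S hS, hdrk (M.E \ A) (subset_refl _)]
  have h1 : M.rk S ≤ M.rk (M.E \ A) := M.rk_mono hS
  have h2 : M.rk (M.E \ A) ≤ M.rk M.E := M.rk_mono Finset.sdiff_subset
  rw [← mul_assoc, ← pow_add]
  congr 2
  omega
end

section
/- Let R be an integral domain and x,y,r,s ∈ R. If M₁ and M₂ are matroids on the same finite ground set E with T̂_{M₁}(x,y,r,s) = T̂_{M₂}(x,y,r,s) as elements of R[t_e : e∈E], and if M₁ ≠ M₂, then either r = s or (x−1)(y−1) = 1. -/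
open Finset MvPolynomial

namespace FinMatroid
variable {α : Type} [DecidableEq α] (M : FinMatroid α)

lemma rk_insert_le (e : α) (S : Finset α) : M.rk (insert e S) ≤ M.rk S + 1 := by
  have h := M.rk_submodular S {e}
  have h1 : M.rk {e} ≤ 1 := by simpa using M.rk_le_card {e}
  have h2 : S ∪ {e} = insert e S := by ext x; simp [or_comm]
  rw [h2] at h
  omega

lemma le_rk_insert (e : α) (S : Finset α) : M.rk S ≤ M.rk (insert e S) :=
  M.rk_mono (Finset.subset_insert e S)

lemma rk_union_le_card (S T : Finset α) : M.rk (S ∪ T) ≤ M.rk S + T.card := by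
  induction T using Finset.induction_on with
  | empty => simpa using M.rk_mono (Finset.union_subset subset_rfl (Finset.empty_subset S))
  | @insert a T ha ih =>
    have h2 : S ∪ insert a T = insert a (S ∪ T) := Finset.union_insert a S T
    have := M.rk_insert_le a (S ∪ T)
    rw [h2, Finset.card_insert_of_notMem ha]
    omega

/-- If adding any element of `E` doesn't increase rank of `S`, then `rk E = rk S`. -/
lemma rk_eq_of_insert_eq {S : Finset α} (hS : S ⊆ M.E)
    (h : ∀ e ∈ M.E, M.rk (insert e S) = M.rk S) : M.rk M.E = M.rk S := by
  have key : ∀ T : Finset α, T ⊆ M.E → M.rk (S ∪ T) = M.rk S := by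
    intro T
    induction T using Finset.induction_on with
    | empty => intro _; simp
    | @insert a T ha ih =>
      intro hsub
      have haE : a ∈ M.E := hsub (Finset.mem_insert_self a T)
      have hTE : T ⊆ M.E := fun x hx => hsub (Finset.mem_insert_of_mem hx)
      have hST := ih hTE
      have hsm := M.rk_submodular (S ∪ T) (insert a S)
      have hu : (S ∪ T) ∪ insert a S = S ∪ insert a T := by ext x; simp; tauto
      have hi : S ⊆ (S ∪ T) ∩ insert a S := by
        intro x hx; simp [hx]
      have h3 := M.rk_mono hi
      have h4 : M.rk (S ∪ insert a T) ≥ M.rk S := M.rk_mono Finset.subset_union_left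
      rw [hu] at hsm
      rw [h a haE] at hsm
      omega
  have := key M.E (subset_rfl)
  rw [Finset.union_eq_right.mpr hS] at this
  exact this

lemma exists_insert_rk_succ {S : Finset α} (hS : S ⊆ M.E) (h : M.rk S < M.rk M.E) :
    ∃ e ∈ M.E, M.rk (insert e S) = M.rk S + 1 := by
  by_contra hc
  push_neg at hc
  have : ∀ e ∈ M.E, M.rk (insert e S) = M.rk S := by
    intro e he
    have := hc e he
    have h1 := M.rk_insert_le e S
    have h2 := M.le_rk_insert e S
    omega
  have := M.rk_eq_of_insert_eq hS this
  omega

/-- Every set contains an independent subset of the same rank. -/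
lemma exists_indep_subset (S : Finset α) : ∃ I ⊆ S, M.rk I = I.card ∧ M.rk I = M.rk S := by
  induction S using Finset.strongInduction with
  | _ S ih =>
    rcases Finset.eq_empty_or_nonempty S with rfl | ⟨e, he⟩
    · exact ⟨∅, subset_rfl, by simp [M.rk_empty], rfl⟩
    · have hss : S.erase e ⊂ S := Finset.erase_ssubset he
      obtain ⟨I, hIsub, hIind, hIrk⟩ := ih (S.erase e) hss
      have hins : insert e (S.erase e) = S := Finset.insert_erase he
      have hle : M.rk S ≤ M.rk (S.erase e) + 1 := by
        have := M.rk_insert_le e (S.erase e); rw [hins] at this; exact this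
      have hge : M.rk (S.erase e) ≤ M.rk S := M.rk_mono (Finset.erase_subset e S)
      rcases eq_or_lt_of_le hge with heq | hlt
      · exact ⟨I, hIsub.trans (Finset.erase_subset e S), hIind, by omega⟩
      · -- rk S = rk (erase) + 1 ; take insert e I
        have heI : e ∉ I := fun hmem => (Finset.notMem_erase e S) (hIsub hmem)
        refine ⟨insert e I, ?_, ?_, ?_⟩
        · intro x hx
          rcases Finset.mem_insert.mp hx with rfl | hx
          · exact he
          · exact (Finset.erase_subset e S) (hIsub hx)
        all_goals {
          have hsm := M.rk_submodular (insert e I) (S.erase e)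
          have hu : insert e I ∪ S.erase e = S := by
            rw [Finset.insert_union, Finset.union_eq_right.mpr hIsub, hins]
          have hi : (insert e I) ∩ S.erase e = I := by
            ext x
            simp only [Finset.mem_inter, Finset.mem_insert, Finset.mem_erase]
            constructor
            · rintro ⟨rfl | hx, hne, _⟩
              · exact absurd rfl hne
              · exact hx
            · intro hx
              exact ⟨Or.inr hx, Finset.mem_erase.mp (hIsub hx) |>.1, Finset.mem_erase.mp (hIsub hx) |>.2⟩
          rw [hu, hi] at hsm
          have hcard := M.rk_le_card (insert e I)
          have hcard2 : (insert e I).card = I.card + 1 := Finset.card_insert_of_notMem heI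
          omega
        }

/-- Extend an independent subset of `E` to a basis. -/
lemma exists_basis_ext_aux : ∀ (k : ℕ) (I : Finset α), I ⊆ M.E → M.rk I = I.card →
    M.rk M.E ≤ M.rk I + k → ∃ B, I ⊆ B ∧ B ⊆ M.E ∧ M.rk B = B.card ∧ M.rk B = M.rk M.E := by
  intro k
  induction k with
  | zero =>
    intro I hIE hInd hle
    exact ⟨I, subset_rfl, hIE, hInd, le_antisymm (M.rk_mono hIE) (by omega)⟩
  | succ k ih =>
    intro I hIE hInd hle
    rcases eq_or_lt_of_le (M.rk_mono hIE) with heq | hlt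
    · exact ⟨I, subset_rfl, hIE, hInd, heq⟩
    · obtain ⟨e, heE, hrk⟩ := M.exists_insert_rk_succ hIE hlt
      have heI : e ∉ I := by
        intro hmem
        rw [Finset.insert_eq_self.mpr hmem] at hrk
        omega
      have hcard : (insert e I).card = I.card + 1 := Finset.card_insert_of_notMem heI
      refine (ih (insert e I) (Finset.insert_subset heE hIE) (by omega) (by omega)).imp ?_
      intro B ⟨h1, h2⟩
      exact ⟨(Finset.subset_insert e I).trans h1, h2⟩

lemma exists_basis_ext {I : Finset α} (hIE : I ⊆ M.E) (hInd : M.rk I = I.card) :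
    ∃ B, I ⊆ B ∧ B ⊆ M.E ∧ M.rk B = B.card ∧ M.rk B = M.rk M.E :=
  M.exists_basis_ext_aux (M.rk M.E) I hIE hInd (by omega)


lemma core (M N : FinMatroid α) (hE : M.E = N.E) {R : Type} [CommRing R] [IsDomain R]
    (a b : R) (hab : a * b ≠ 1)
    (W : ∀ T ∈ M.E.powerset, a ^ (M.rk M.E - M.rk T) * b ^ (T.card - M.rk T)
        = a ^ (N.rk M.E - N.rk T) * b ^ (T.card - N.rk T))
    (S : Finset α) (hSE : S ⊆ M.E)
    (hmin : ∀ T ⊆ M.E, T.card < S.card → M.rk T = N.rk T)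
    (hlt : N.rk S < M.rk S) : False := by
  -- S is nonempty
  rcases Finset.eq_empty_or_nonempty S with rfl | ⟨e, he⟩
  · rw [M.rk_empty, N.rk_empty] at hlt; omega
  set S' := S.erase e with hS'def
  have hS'S : S' ⊆ S := Finset.erase_subset e S
  have hS'E : S' ⊆ M.E := hS'S.trans hSE
  have hcardS' : S'.card = S.card - 1 := Finset.card_erase_of_mem he
  have hScard_pos : 0 < S.card := Finset.card_pos.mpr ⟨e, he⟩
  have hcardlt : S'.card < S.card := by omega
  set c := M.rk S' with hcdef
  have hcN : N.rk S' = c := (hmin S' hS'E hcardlt).symm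
  have hins : insert e S' = S := Finset.insert_erase he
  have hMS_le : M.rk S ≤ c + 1 := by
    have := M.rk_insert_le e S'; rw [hins] at this; exact this
  have hNS_ge : c ≤ N.rk S := by rw [← hcN]; exact N.rk_mono hS'S
  have hMS : M.rk S = c + 1 := by omega
  have hNS : N.rk S = c := by omega
  -- independent subset I of S' of full rank
  obtain ⟨I, hIS', hIind, hIrk⟩ := M.exists_indep_subset S'
  have hIcard : I.card = c := by omega
  have heI : e ∉ I := fun hmem => (Finset.notMem_erase e S) (hIS' hmem)
  set J := insert e I with hJdef
  have hJS : J ⊆ S := by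
    rw [← hins]; exact Finset.insert_subset_insert e hIS'
  have hJcard : J.card = c + 1 := by
    rw [hJdef, Finset.card_insert_of_notMem heI, hIcard]
  have hMJ : M.rk J = c + 1 := by
    have hsm := M.rk_submodular J S'
    have hu : J ∪ S' = S := by
      rw [hJdef, Finset.insert_union, Finset.union_eq_right.mpr hIS', hins]
    have hi : J ∩ S' = I := by
      rw [hJdef, Finset.insert_inter_of_notMem (Finset.notMem_erase e S)]
      exact Finset.inter_eq_left.mpr hIS'
    rw [hu, hi] at hsm
    have h1 : M.rk J ≤ M.rk S := M.rk_mono hJS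
    omega
  have hNJ : N.rk J = c := by
    have h1 : N.rk J ≤ N.rk S := N.rk_mono hJS
    have h2 : N.rk I ≤ N.rk J := N.rk_mono (Finset.subset_insert e I)
    have h3 : N.rk I = c := by
      rw [← (hmin I (hIS'.trans hS'E) (by
        have := Finset.card_le_card hIS'; omega))]
      omega
    omega
  -- minimality forces J = S, hence S' = I is independent
  have hJS_eq : J = S := by
    refine Finset.eq_of_subset_of_card_le hJS ?_
    by_contra hcc
    push_neg at hcc
    have := hmin J (hJS.trans hSE) hcc
    omega
  have hScard : S.card = c + 1 := by rw [← hJS_eq]; exact hJcard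
  -- the W-equations at S' and S
  have hρM : c + 1 ≤ M.rk M.E := by
    have := M.rk_mono hSE; omega
  have hρN : c ≤ N.rk M.E := by
    have := N.rk_mono hSE; omega
  have E1 : a ^ (M.rk M.E - c) = a ^ (N.rk M.E - c) := by
    have h := W S' (Finset.mem_powerset.mpr hS'E)
    rw [← hcdef, hcN] at h
    have h0 : S'.card - c = 0 := by
      have := M.rk_le_card S'; omega
    rw [h0, pow_zero, mul_one, mul_one] at h
    exact h
  have E2 : a ^ (M.rk M.E - (c + 1)) = a ^ (N.rk M.E - c) * b := by
    have h := W S (Finset.mem_powerset.mpr hSE)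
    rw [hMS, hNS] at h
    have h0 : S.card - (c + 1) = 0 := by omega
    have h1 : S.card - c = 1 := by omega
    rw [h0, h1, pow_zero, pow_one, mul_one] at h
    exact h
  have E2' : a ^ (M.rk M.E - c) = a ^ (N.rk M.E - c) * b * a := by
    rw [show M.rk M.E - c = (M.rk M.E - (c + 1)) + 1 by omega, pow_succ, E2]
  have h6 : a ^ (N.rk M.E - c) * (1 - a * b) = 0 := by
    linear_combination E2' - E1
  have ha : a = 0 := by
    rcases mul_eq_zero.mp h6 with h | h
    · exact (pow_eq_zero_iff'.mp h).1
    · exact absurd (sub_eq_zero.mp h).symm hab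
  subst ha
  -- extend S to a basis B of M
  obtain ⟨B, hSB, hBE, hBind, hBrk⟩ := M.exists_basis_ext hSE (by omega)
  have WB := W B (Finset.mem_powerset.mpr hBE)
  have eM : M.rk M.E - M.rk B = 0 := by omega
  have eB : B.card - M.rk B = 0 := by omega
  rw [eM, eB, pow_zero, pow_zero, one_mul] at WB
  -- from WB : 1 = 0 ^ (N.rk M.E - N.rk B) * b ^ (#B - N.rk B), deduce N.rk B = N.rk M.E
  have hNB : N.rk M.E ≤ N.rk B := by
    by_contra hc
    rw [zero_pow (by omega : N.rk M.E - N.rk B ≠ 0), zero_mul] at WB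
    exact one_ne_zero WB
  have hNBE : N.rk B ≤ N.rk M.E := N.rk_mono hBE
  -- bound N.rk B via S
  have hBcard : B.card = M.rk M.E := by rw [← hBind, hBrk]
  have hbound : N.rk B ≤ c + (M.rk M.E - (c + 1)) := by
    have h1 := N.rk_union_le_card S (B \ S)
    rw [Finset.union_sdiff_of_subset hSB, Finset.card_sdiff_of_subset hSB, hNS] at h1
    omega
  have hNlt : N.rk M.E < M.rk M.E := by omega
  -- a basis of N
  obtain ⟨B₂, _, hB₂E, hB₂ind, hB₂rk⟩ := N.exists_basis_ext
    (show (∅ : Finset α) ⊆ N.E from Finset.empty_subset _) (by simp [N.rk_empty])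
  rw [← hE] at hB₂E
  have hB₂rk' : N.rk B₂ = N.rk M.E := by rw [hB₂rk, hE]
  have WB₂ := W B₂ (Finset.mem_powerset.mpr hB₂E)
  have eN : N.rk M.E - N.rk B₂ = 0 := by omega
  have eB₂ : B₂.card - N.rk B₂ = 0 := by omega
  rw [eN, eB₂, pow_zero, pow_zero, mul_one] at WB₂
  -- WB₂ : 0 ^ (M.rk M.E - M.rk B₂) * b ^ (#B₂ - M.rk B₂) = 1
  have hMB₂ : M.rk M.E ≤ M.rk B₂ := by
    by_contra hc
    rw [zero_pow (by omega : M.rk M.E - M.rk B₂ ≠ 0), zero_mul] at WB₂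
    exact one_ne_zero WB₂.symm
  have h1 : M.rk B₂ ≤ B₂.card := M.rk_le_card B₂
  have h2 : B₂.card = N.rk M.E := by rw [← hB₂ind, hB₂rk']
  omega

lemma rk_eq_of_w (M N : FinMatroid α) (hE : M.E = N.E) {R : Type} [CommRing R] [IsDomain R]
    (a b : R) (hab : a * b ≠ 1)
    (W : ∀ T ∈ M.E.powerset, a ^ (M.rk M.E - M.rk T) * b ^ (T.card - M.rk T)
        = a ^ (N.rk M.E - N.rk T) * b ^ (T.card - N.rk T)) :
    ∀ T ∈ M.E.powerset, M.rk T = N.rk T := by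
  by_contra hc
  push_neg at hc
  obtain ⟨T₀, hT₀, hneq⟩ := hc
  obtain ⟨S, hSmem, hSmin⟩ := Finset.exists_min_image
    (M.E.powerset.filter (fun T => M.rk T ≠ N.rk T)) Finset.card
    ⟨T₀, by simp only [Finset.mem_filter]; exact ⟨hT₀, hneq⟩⟩
  simp only [Finset.mem_filter, Finset.mem_powerset] at hSmem
  obtain ⟨hSE, hSne⟩ := hSmem
  have hmin : ∀ T ⊆ M.E, T.card < S.card → M.rk T = N.rk T := by
    intro T hTE hTcard
    by_contra hT
    have := hSmin T (by simp only [Finset.mem_filter, Finset.mem_powerset]; exact ⟨hTE, hT⟩)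
    omega
  rcases Nat.lt_trichotomy (N.rk S) (M.rk S) with h | h | h
  · exact core M N hE a b hab W S hSE hmin h
  · exact hSne h.symm
  · have W' : ∀ T ∈ N.E.powerset, a ^ (N.rk N.E - N.rk T) * b ^ (T.card - N.rk T)
        = a ^ (M.rk N.E - M.rk T) * b ^ (T.card - M.rk T) := by
      intro T hT
      rw [← hE] at hT ⊢
      exact (W T hT).symm
    have hmin' : ∀ T ⊆ N.E, T.card < S.card → N.rk T = M.rk T := by
      intro T hTE hc
      exact (hmin T (by rwa [← hE] at hTE) hc).symm
    exact core N M hE.symm a b hab W' S (by rwa [← hE]) hmin' h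

end FinMatroid

section Poly
open MvPolynomial
variable {α : Type} [DecidableEq α] {R : Type} [CommRing R]

lemma indic_apply (A : Finset α) (x : α) :
    (∑ e ∈ A, Finsupp.single e (1 : ℕ)) x = if x ∈ A then 1 else 0 := by
  rw [Finset.sum_apply']
  simp [Finsupp.single_apply]

lemma indic_inj {A B : Finset α}
    (h : (∑ e ∈ A, Finsupp.single e (1 : ℕ)) = ∑ e ∈ B, Finsupp.single e (1 : ℕ)) : A = B := by
  ext x
  have := congrFun (congrArg (fun f : α →₀ ℕ => (f : α → ℕ)) h) x
  simp only [indic_apply] at this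
  by_cases hA : x ∈ A <;> by_cases hB : x ∈ B <;> simp_all

lemma prod_X_eq (A : Finset α) :
    (∏ e ∈ A, (X e : MvPolynomial α R)) = monomial (∑ e ∈ A, Finsupp.single e 1) 1 :=
  (monomial_sum_one A _).symm

lemma term_expand (E S : Finset α) (hS : S ⊆ E) (w r s : R) :
    (C w : MvPolynomial α R) * ((∏ e ∈ S, (1 + C r * X e)) * ∏ e ∈ E \ S, (1 + C s * X e)) =
    ∑ A ∈ E.powerset, monomial (∑ e ∈ A, Finsupp.single e 1)
      (w * ∏ e ∈ A, (if e ∈ S then r else s)) := by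
  have h1 : (∏ e ∈ S, (1 + C r * X e)) * ∏ e ∈ E \ S, (1 + C s * X e)
      = ∏ e ∈ E, ((if e ∈ S then C r else C s) * X e + 1) := by
    have hl : (∏ e ∈ S, (1 + C r * X e) : MvPolynomial α R)
        = ∏ e ∈ S, ((if e ∈ S then C r else C s) * X e + 1) :=
      Finset.prod_congr rfl (fun e he => by rw [if_pos he, add_comm])
    have hr : (∏ e ∈ E \ S, (1 + C s * X e) : MvPolynomial α R)
        = ∏ e ∈ E \ S, ((if e ∈ S then C r else C s) * X e + 1) :=
      Finset.prod_congr rfl (fun e he => by rw [if_neg (Finset.mem_sdiff.mp he).2, add_comm])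
    rw [hl, hr, ← Finset.prod_union Finset.disjoint_sdiff, Finset.union_sdiff_of_subset hS]
  rw [h1, Finset.prod_add, Finset.mul_sum]
  refine Finset.sum_congr rfl (fun A hA => ?_)
  have h2 : (∏ e ∈ A, (if e ∈ S then C r else C s) : MvPolynomial α R)
      = C (∏ e ∈ A, if e ∈ S then r else s) := by
    rw [map_prod]
    exact Finset.prod_congr rfl (fun e _ => by split <;> rfl)
  rw [Finset.prod_const_one, mul_one, Finset.prod_mul_distrib, prod_X_eq, h2, ← mul_assoc,
    ← map_mul, C_mul_monomial, mul_one]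


lemma eqTutte_expand (M : FinMatroid α) (x y r s : R) :
    M.eqTutte (C x) (C y) (C r) (C s) (X : α → MvPolynomial α R) =
    ∑ A ∈ M.E.powerset, monomial (∑ e ∈ A, Finsupp.single e 1)
      (∑ S ∈ M.E.powerset, (x - 1) ^ (M.rk M.E - M.rk S) * (y - 1) ^ (S.card - M.rk S)
        * ∏ e ∈ A, (if e ∈ S then r else s)) := by
  calc M.eqTutte (C x) (C y) (C r) (C s) (X : α → MvPolynomial α R)
      = ∑ S ∈ M.E.powerset, ∑ A ∈ M.E.powerset, monomial (∑ e ∈ A, Finsupp.single e 1)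
        ((x - 1) ^ (M.rk M.E - M.rk S) * (y - 1) ^ (S.card - M.rk S)
          * ∏ e ∈ A, (if e ∈ S then r else s)) := by
        rw [FinMatroid.eqTutte]
        refine Finset.sum_congr rfl (fun S hS => ?_)
        have hS' := Finset.mem_powerset.mp hS
        have hCx : (C x - 1 : MvPolynomial α R) = C (x - 1) := by rw [map_sub, map_one]
        have hCy : (C y - 1 : MvPolynomial α R) = C (y - 1) := by rw [map_sub, map_one]
        rw [hCx, hCy, ← map_pow, ← map_pow, ← map_mul, mul_assoc]
        exact term_expand M.E S hS' _ r s
    _ = _ := by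
        rw [Finset.sum_comm]
        exact Finset.sum_congr rfl (fun A _ => (map_sum (monomial _) _ _).symm)

lemma coeff_extract (E : Finset α) (c d : Finset α → R)
    (h : ∑ A ∈ E.powerset, (monomial (∑ e ∈ A, Finsupp.single e 1) (c A) : MvPolynomial α R)
       = ∑ A ∈ E.powerset, monomial (∑ e ∈ A, Finsupp.single e 1) (d A)) :
    ∀ A ∈ E.powerset, c A = d A := by
  intro A₀ hA₀
  have h' := congrArg (coeff (∑ e ∈ A₀, Finsupp.single e 1)) h
  rw [coeff_sum, coeff_sum] at h'
  have key : ∀ g : Finset α → R,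
      (∑ A ∈ E.powerset, coeff (∑ e ∈ A₀, Finsupp.single e 1)
        (monomial (∑ e ∈ A, Finsupp.single e 1) (g A))) = g A₀ := by
    intro g
    rw [Finset.sum_eq_single A₀]
    · rw [coeff_monomial, if_pos rfl]
    · intro A _ hne
      rw [coeff_monomial, if_neg (fun hEq => hne (indic_inj hEq))]
    · intro hA
      exact absurd hA₀ hA
  rw [key c, key d] at h'
  exact h'

lemma inversion (E : Finset α) [IsDomain R] (r s : R) (hrs : r ≠ s) (d : Finset α → R)
    (h : ∀ A ∈ E.powerset, ∑ S ∈ E.powerset, d S * ∏ e ∈ A, (if e ∈ S then r else s) = 0) :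
    ∀ S₀ ∈ E.powerset, d S₀ = 0 := by
  intro S₀ hS₀
  have hS₀E := Finset.mem_powerset.mp hS₀
  have key : ∑ A ∈ E.powerset,
      ((∏ e ∈ A, (if e ∈ S₀ then (1 : R) else -1)) * ∏ e ∈ E \ A, (if e ∈ S₀ then -s else r))
        * (∑ S ∈ E.powerset, d S * ∏ e ∈ A, (if e ∈ S then r else s)) = 0 :=
    Finset.sum_eq_zero (fun A hA => by rw [h A hA, mul_zero])
  have swap : ∑ A ∈ E.powerset,
      ((∏ e ∈ A, (if e ∈ S₀ then (1 : R) else -1)) * ∏ e ∈ E \ A, (if e ∈ S₀ then -s else r))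
        * (∑ S ∈ E.powerset, d S * ∏ e ∈ A, (if e ∈ S then r else s))
      = ∑ S ∈ E.powerset, d S * ∑ A ∈ E.powerset,
          (∏ e ∈ A, ((if e ∈ S₀ then (1 : R) else -1) * (if e ∈ S then r else s)))
            * ∏ e ∈ E \ A, (if e ∈ S₀ then -s else r) := by
    calc ∑ A ∈ E.powerset,
        ((∏ e ∈ A, (if e ∈ S₀ then (1 : R) else -1)) * ∏ e ∈ E \ A, (if e ∈ S₀ then -s else r))
          * (∑ S ∈ E.powerset, d S * ∏ e ∈ A, (if e ∈ S then r else s))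
        = ∑ A ∈ E.powerset, ∑ S ∈ E.powerset,
            ((∏ e ∈ A, (if e ∈ S₀ then (1 : R) else -1)) * ∏ e ∈ E \ A, (if e ∈ S₀ then -s else r))
              * (d S * ∏ e ∈ A, (if e ∈ S then r else s)) :=
          Finset.sum_congr rfl (fun A _ => Finset.mul_sum _ _ _)
      _ = ∑ S ∈ E.powerset, ∑ A ∈ E.powerset,
            ((∏ e ∈ A, (if e ∈ S₀ then (1 : R) else -1)) * ∏ e ∈ E \ A, (if e ∈ S₀ then -s else r))
              * (d S * ∏ e ∈ A, (if e ∈ S then r else s)) := Finset.sum_comm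
      _ = _ := by
          refine Finset.sum_congr rfl (fun S _ => ?_)
          rw [Finset.mul_sum]
          refine Finset.sum_congr rfl (fun A _ => ?_)
          rw [Finset.prod_mul_distrib]
          ring
  rw [swap] at key
  have inner : ∀ S ∈ E.powerset, (∑ A ∈ E.powerset,
      (∏ e ∈ A, ((if e ∈ S₀ then (1 : R) else -1) * (if e ∈ S then r else s)))
        * ∏ e ∈ E \ A, (if e ∈ S₀ then -s else r))
      = if S = S₀ then (r - s) ^ E.card else 0 := by
    intro S hS
    have hSE := Finset.mem_powerset.mp hS
    rw [← Finset.prod_add]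
    by_cases hss : S = S₀
    · subst hss
      rw [if_pos rfl, ← Finset.prod_const]
      refine Finset.prod_congr rfl (fun e _ => ?_)
      by_cases he : e ∈ S <;> simp only [he, if_true, if_false] <;> ring
    · rw [if_neg hss]
      have hex : ∃ e, ¬ (e ∈ S ↔ e ∈ S₀) := by
        by_contra hall
        push_neg at hall
        exact hss (Finset.ext fun e => hall e)
      obtain ⟨e, he⟩ := hex
      have hiff := not_iff.mp he
      by_cases h1 : e ∈ S
      · have h2 : e ∉ S₀ := fun hc => (hiff.mpr hc) h1
        exact Finset.prod_eq_zero (hSE h1)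
          (by simp only [h1, h2, if_true, if_false]; ring)
      · have h2 : e ∈ S₀ := hiff.mp h1
        exact Finset.prod_eq_zero (hS₀E h2)
          (by simp only [h1, h2, if_true, if_false]; ring)
  have key2 : ∑ S ∈ E.powerset, d S * (if S = S₀ then (r - s) ^ E.card else 0) = 0 := by
    calc ∑ S ∈ E.powerset, d S * (if S = S₀ then (r - s) ^ E.card else 0)
        = ∑ S ∈ E.powerset, d S * ∑ A ∈ E.powerset,
            (∏ e ∈ A, ((if e ∈ S₀ then (1 : R) else -1) * (if e ∈ S then r else s)))
              * ∏ e ∈ E \ A, (if e ∈ S₀ then -s else r) :=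
          Finset.sum_congr rfl (fun S hS => by rw [inner S hS])
      _ = 0 := key
  rw [Finset.sum_eq_single S₀] at key2
  · rw [if_pos rfl] at key2
    rcases mul_eq_zero.mp key2 with h' | h'
    · exact h'
    · exact absurd h' (pow_ne_zero _ (sub_ne_zero.mpr hrs))
  · intro S _ hne
    rw [if_neg hne, mul_zero]
  · intro hA
    exact absurd hS₀ hA

end Poly


/-- If two different matroids on the same ground set have the same
equivariant Tutte polynomial evaluated at x,y,r,s in an integral domain R
(as elements of R[t_e : e∈E]), then r = s or (x−1)(y−1) = 1. -/
theorem eqTutte_evaluation_uniqueness {α : Type} [DecidableEq α]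
    (M₁ M₂ : FinMatroid α) (hE : M₁.E = M₂.E)
    {R : Type} [CommRing R] [IsDomain R] (x y r s : R)
    (heq : M₁.eqTutte (R := MvPolynomial α R) (MvPolynomial.C x) (MvPolynomial.C y)
          (MvPolynomial.C r) (MvPolynomial.C s) MvPolynomial.X
        = M₂.eqTutte (MvPolynomial.C x) (MvPolynomial.C y)
          (MvPolynomial.C r) (MvPolynomial.C s) MvPolynomial.X)
    (hne : ∃ S ⊆ M₁.E, M₁.rk S ≠ M₂.rk S) :
    r = s ∨ (x - 1) * (y - 1) = 1 := by
  by_contra hcon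
  push_neg at hcon
  obtain ⟨hrs, hab⟩ := hcon
  rw [eqTutte_expand M₁ x y r s, eqTutte_expand M₂ x y r s, ← hE] at heq
  have hco := coeff_extract M₁.E _ _ heq
  have hzero : ∀ A ∈ M₁.E.powerset, ∑ S ∈ M₁.E.powerset,
      ((x - 1) ^ (M₁.rk M₁.E - M₁.rk S) * (y - 1) ^ (S.card - M₁.rk S)
        - (x - 1) ^ (M₂.rk M₁.E - M₂.rk S) * (y - 1) ^ (S.card - M₂.rk S))
        * ∏ e ∈ A, (if e ∈ S then r else s) = 0 := by
    intro A hA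
    have h' := hco A hA
    calc ∑ S ∈ M₁.E.powerset,
        ((x - 1) ^ (M₁.rk M₁.E - M₁.rk S) * (y - 1) ^ (S.card - M₁.rk S)
          - (x - 1) ^ (M₂.rk M₁.E - M₂.rk S) * (y - 1) ^ (S.card - M₂.rk S))
          * ∏ e ∈ A, (if e ∈ S then r else s)
        = ∑ S ∈ M₁.E.powerset,
          ((x - 1) ^ (M₁.rk M₁.E - M₁.rk S) * (y - 1) ^ (S.card - M₁.rk S)
              * ∏ e ∈ A, (if e ∈ S then r else s)
            - (x - 1) ^ (M₂.rk M₁.E - M₂.rk S) * (y - 1) ^ (S.card - M₂.rk S)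
              * ∏ e ∈ A, (if e ∈ S then r else s)) :=
          Finset.sum_congr rfl (fun S _ => sub_mul _ _ _)
      _ = 0 := by rw [Finset.sum_sub_distrib, h', sub_self]
  have hW := inversion M₁.E r s hrs _ hzero
  have W : ∀ T ∈ M₁.E.powerset,
      (x - 1) ^ (M₁.rk M₁.E - M₁.rk T) * (y - 1) ^ (T.card - M₁.rk T)
      = (x - 1) ^ (M₂.rk M₁.E - M₂.rk T) * (y - 1) ^ (T.card - M₂.rk T) := by
    intro T hT
    exact sub_eq_zero.mp (hW T hT)
  have hrk := FinMatroid.rk_eq_of_w M₁ M₂ hE (x - 1) (y - 1) hab W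
  obtain ⟨S, hSsub, hSne⟩ := hne
  exact hSne (hrk S (Finset.mem_powerset.mpr hSsub))
end
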